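/- Let the observation space Y be partitioned into two disjoint Borel subsets Y₁ and Y₂ with Y₁ open in Y and Y₂ countable. Suppose: (a) the stochastic kernels P on X given X×A and Q on Y given A×X are weakly continuous; (b) for each y ∈ Y₂ the function (a,x) ↦ Q({y}|a,x) is continuous on A×X; and (c) there exists a stochastic kernel H on X given P(X)×A×Y satisfying the disintegration identity (3.4) whose restriction to P(X)×A×Y₁ is weakly continuous. Then the stochastic kernel q on P(X) given P(X)×A, defined by q(D|z,a) = ∫_Y 1{H(z,a,y) ∈ D} R′(dy|z,a), is weakly continuous. -/

import Mathlib

open MeasureTheory Filter Topology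
open scoped ENNReal NNReal

/-- The joint kernel `R(B×C|z,a) = ∫_X ∫_B Q(C|a,x') P(dx'|x,a) z(dx)` of formula (3.3). -/
noncomputable def Rfun {X Y A : Type*} [MeasurableSpace X] [MeasurableSpace Y]
    (P : X × A → ProbabilityMeasure X) (Q : A × X → ProbabilityMeasure Y)
    (z : ProbabilityMeasure X) (a : A) (B : Set X) (C : Set Y) : ℝ≥0∞ :=
  ∫⁻ x, (∫⁻ x' in B, ((Q (a, x') : Measure Y) C) ∂((P (x, a) : Measure X))) ∂(z : Measure X)

/-- The marginal observation kernel `R'(dy|z,a)` on `Y` given `P(X)×A`, as a measure. -/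
noncomputable def RprimeM {X Y A : Type*} [MeasurableSpace X] [MeasurableSpace Y]
    (P : X × A → ProbabilityMeasure X) (Q : A × X → ProbabilityMeasure Y)
    (z : ProbabilityMeasure X) (a : A) : Measure Y :=
  ((z : Measure X).bind fun x => (P (x, a) : Measure X)).bind fun x' => (Q (a, x') : Measure Y)

/-- The disintegration identity (3.4). -/
def Disint {X Y A : Type*} [MeasurableSpace X] [MeasurableSpace Y]
    (P : X × A → ProbabilityMeasure X) (Q : A × X → ProbabilityMeasure Y)
    (H : ProbabilityMeasure X × A × Y → ProbabilityMeasure X) : Prop :=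
  ∀ (z : ProbabilityMeasure X) (a : A) (B : Set X) (C : Set Y),
    MeasurableSet B → MeasurableSet C →
      Rfun P Q z a B C = ∫⁻ y in C, ((H (z, a, y) : Measure X) B) ∂(RprimeM P Q z a)

/-- The Borel σ-algebra of the weak topology on `P(X)`. -/
noncomputable instance probabilityMeasureMeasurableSpace {X : Type*}
    [MeasurableSpace X] [TopologicalSpace X] [OpensMeasurableSpace X] :
    MeasurableSpace (ProbabilityMeasure X) := borel _

/-- The transition kernel `q(D|z,a) = ∫_Y 1{H(z,a,y) ∈ D} R'(dy|z,a)` of the COMDP. -/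
noncomputable def qker {X Y A : Type*}
    [MeasurableSpace X] [TopologicalSpace X] [OpensMeasurableSpace X] [MeasurableSpace Y]
    (P : X × A → ProbabilityMeasure X) (Q : A × X → ProbabilityMeasure Y)
    (H : ProbabilityMeasure X × A × Y → ProbabilityMeasure X)
    (z : ProbabilityMeasure X) (a : A) : Measure (ProbabilityMeasure X) :=
  (RprimeM P Q z a).map fun y => H (z, a, y)


noncomputable instance probabilityMeasureBorelSpace {X : Type*}
    [MeasurableSpace X] [TopologicalSpace X] [OpensMeasurableSpace X] :
    BorelSpace (ProbabilityMeasure X) := ⟨rfl⟩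

lemma integrable_of_bounded'' {β : Type*} [MeasurableSpace β] {ν : Measure β}
    [IsFiniteMeasure ν] {f : β → ℝ}
    (hf : AEStronglyMeasurable f ν) {M : ℝ} (hM : ∀ y, |f y| ≤ M) : Integrable f ν :=
  ⟨hf, HasFiniteIntegral.of_bounded (C := M)
    (Eventually.of_forall (by simpa [Real.norm_eq_abs] using hM))⟩

section AuxBind0
variable {α β : Type*} [MeasurableSpace α] [MeasurableSpace β]

lemma isProbabilityMeasure_bind {m : Measure α} [IsProbabilityMeasure m]
    {k : α → Measure β} (hk : Measurable k) (hkp : ∀ x, IsProbabilityMeasure (k x)) :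
    IsProbabilityMeasure (m.bind k) := by
  constructor
  rw [Measure.bind_apply MeasurableSet.univ hk.aemeasurable]
  simp [measure_univ]

lemma integral_bind_of_bounded {m : Measure α} [IsProbabilityMeasure m]
    {k : α → Measure β} (hk : Measurable k) (hkp : ∀ x, IsProbabilityMeasure (k x))
    {f : β → ℝ} (hf : Measurable f) {M : ℝ} (hM : ∀ y, |f y| ≤ M) :
    ∫ y, f y ∂(m.bind k) = ∫ x, ∫ y, f y ∂(k x) ∂m := by
  haveI : IsProbabilityMeasure (m.bind k) := isProbabilityMeasure_bind hk hkp
  have hMnn : 0 ≤ M := by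
    obtain ⟨x⟩ := Measure.nonempty_of_neZero m
    haveI := hkp x
    obtain ⟨y⟩ := Measure.nonempty_of_neZero (k x)
    exact le_trans (abs_nonneg _) (hM y)
  -- positive and negative parts
  have hbound : ∀ (g : β → ℝ), Measurable g → (∀ y, |g y| ≤ M) →
      ∀ (ν : Measure β), IsProbabilityMeasure ν →
        (∫⁻ y, ENNReal.ofReal (g y) ∂ν) ≤ ENNReal.ofReal M := by
    intro g hg hgM ν hν
    calc ∫⁻ y, ENNReal.ofReal (g y) ∂ν ≤ ∫⁻ _, ENNReal.ofReal M ∂ν :=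
          lintegral_mono fun y => ENNReal.ofReal_le_ofReal ((abs_le.mp (hgM y)).2)
      _ = ENNReal.ofReal M := by simp [measure_univ]
  have key : ∀ (g : β → ℝ), Measurable g → (∀ y, |g y| ≤ M) →
      ∫ x, (∫⁻ y, ENNReal.ofReal (g y) ∂(k x)).toReal ∂m
        = (∫⁻ y, ENNReal.ofReal (g y) ∂(m.bind k)).toReal := by
    intro g hg hgM
    have hmeasL : Measurable fun x => ∫⁻ y, ENNReal.ofReal (g y) ∂(k x) :=
      (Measure.measurable_lintegral (hg.ennreal_ofReal)).comp hk
    rw [Measure.lintegral_bind hk.aemeasurable hg.ennreal_ofReal.aemeasurable, ← integral_toReal hmeasL.aemeasurable]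
    exact Eventually.of_forall fun x =>
      lt_of_le_of_lt (hbound g hg hgM (k x) (hkp x)) ENNReal.ofReal_lt_top
  have hint : ∀ (ν : Measure β), IsProbabilityMeasure ν → Integrable f ν := fun ν hν =>
    integrable_of_bounded'' hf.aestronglyMeasurable hM
  rw [integral_eq_lintegral_pos_part_sub_lintegral_neg_part (hint _ inferInstance)]
  rw [← key f hf hM, ← key (fun y => - f y) hf.neg (by simpa using fun y => (abs_neg (f y)) ▸ hM y)]
  rw [← integral_sub]
  · refine integral_congr_ae (Eventually.of_forall fun x => ?_)
    haveI := hkp x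
    dsimp only
    rw [integral_eq_lintegral_pos_part_sub_lintegral_neg_part (hint _ (hkp x))]
  · refine integrable_of_bounded'' ?_ (M := M) ?_
    · exact ((Measure.measurable_lintegral (hf.ennreal_ofReal)).comp hk).ennreal_toReal.aestronglyMeasurable
    · intro x
      rw [abs_of_nonneg ENNReal.toReal_nonneg]
      calc (∫⁻ y, ENNReal.ofReal (f y) ∂(k x)).toReal ≤ (ENNReal.ofReal M).toReal :=
            ENNReal.toReal_mono ENNReal.ofReal_ne_top (hbound f hf hM (k x) (hkp x))
        _ ≤ M := le_of_eq (ENNReal.toReal_ofReal hMnn)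
  · refine integrable_of_bounded'' ?_ (M := M) ?_
    · exact ((Measure.measurable_lintegral (hf.neg.ennreal_ofReal)).comp hk).ennreal_toReal.aestronglyMeasurable
    · intro x
      rw [abs_of_nonneg ENNReal.toReal_nonneg]
      calc (∫⁻ y, ENNReal.ofReal (- f y) ∂(k x)).toReal ≤ (ENNReal.ofReal M).toReal :=
            ENNReal.toReal_mono ENNReal.ofReal_ne_top
              (hbound _ hf.neg (by simpa using fun y => (abs_neg (f y)) ▸ hM y) (k x) (hkp x))
        _ ≤ M := le_of_eq (ENNReal.toReal_ofReal hMnn)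
end AuxBind0

set_option linter.unusedSectionVars false

section AuxWeakConv
variable {S : Type*} [MetricSpace S] [MeasurableSpace S] [BorelSpace S]

lemma setIntegral_tendsto_of_continuousOn
    {μs : ℕ → ProbabilityMeasure S} {μ : ProbabilityMeasure S}
    (hμ : Tendsto μs atTop (𝓝 μ)) {U : Set S} (hU : IsOpen U)
    (hcompl : Tendsto (fun n => ((μs n : Measure S) Uᶜ).toReal) atTop
      (𝓝 (((μ : Measure S) Uᶜ).toReal)))
    {φ : S → ℝ} (hφm : Measurable φ) {M : ℝ} (hM : ∀ y, |φ y| ≤ M)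
    (hφc : ContinuousOn φ U) :
    Tendsto (fun n => ∫ y in U, φ y ∂(μs n : Measure S)) atTop
      (𝓝 (∫ y in U, φ y ∂(μ : Measure S))) := by
  rcases eq_or_ne Uᶜ ∅ with hUc | hUc
  · -- U = univ, φ is continuous and bounded on all of S
    have hUuniv : U = Set.univ := by
      rw [← Set.compl_empty, ← hUc, compl_compl]
    subst hUuniv
    have hc : Continuous φ := continuousOn_univ.mp hφc
    have hMnn : 0 ≤ M := by
      rcases isEmpty_or_nonempty S with hS | hS
      · -- probability measure on empty space: contradiction
        exact absurd (measure_univ (μ := (μ : Measure S))) (by simp [Set.univ_eq_empty_iff.mpr hS])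
      · exact le_trans (abs_nonneg _) (hM hS.some)
    set F : BoundedContinuousFunction S ℝ :=
      BoundedContinuousFunction.ofNormedAddCommGroup φ hc M
        (by simpa [Real.norm_eq_abs] using hM)
    have := ProbabilityMeasure.tendsto_iff_forall_integral_tendsto.mp hμ F
    simpa [F, Measure.restrict_univ, BoundedContinuousFunction.coe_ofNormedAddCommGroup] using this
  · have hUcne : (Uᶜ : Set S).Nonempty := Set.nonempty_iff_ne_empty.mpr hUc
    have hMnn : 0 ≤ M := le_trans (abs_nonneg _) (hM hUcne.some)
    have hUcclosed : IsClosed (Uᶜ : Set S) := hU.isClosed_compl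
    -- the closed neighborhoods of Uᶜ
    set C : ℝ → Set S := fun δ => {y | Metric.infDist y Uᶜ ≤ δ} with hC
    have hCclosed : ∀ δ, IsClosed (C δ) :=
      fun δ => isClosed_le (Metric.continuous_infDist_pt _) continuous_const
    have hCmeas : ∀ δ, MeasurableSet (C δ) := fun δ => (hCclosed δ).measurableSet
    have hCinter : ⋂ (k : ℕ), C (1 / (k + 1)) = Uᶜ := by
      ext y
      simp only [Set.mem_iInter, hC, Set.mem_setOf_eq]
      constructor
      · intro h
        have h0 : Metric.infDist y Uᶜ ≤ 0 := by
          refine le_of_forall_pos_le_add fun ε hε => ?_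
          obtain ⟨k, hk⟩ := exists_nat_one_div_lt hε
          exact le_trans (h k) (by linarith [hk])
        rw [hUcclosed.mem_iff_infDist_zero hUcne]
        exact le_antisymm h0 Metric.infDist_nonneg
      · intro hy k
        rw [Metric.infDist_zero_of_mem hy]
        positivity
    -- choose δ with μ (C δ) ≤ μ Uᶜ + η
    have hmono : Antitone fun k : ℕ => C (1 / (k + 1)) := by
      intro i j hij y hy
      simp only [hC, Set.mem_setOf_eq] at hy ⊢
      refine le_trans hy (one_div_le_one_div_of_le (by positivity) ?_)
      have : (i : ℝ) ≤ j := Nat.cast_le.mpr hij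
      linarith
    have hCtend : Tendsto (fun k : ℕ => (μ : Measure S) (C (1 / (k + 1)))) atTop
        (𝓝 ((μ : Measure S) Uᶜ)) := by
      have := tendsto_measure_iInter_atTop (μ := (μ : Measure S))
        (s := fun k : ℕ => C (1 / (k + 1)))
        (fun k => (hCmeas _).nullMeasurableSet) hmono ⟨0, measure_ne_top _ _⟩
      rwa [hCinter] at this
    rw [Metric.tendsto_atTop]
    intro ε hε
    set η := ε / (4 * M + 2) with hη
    have hden : (0:ℝ) < 4 * M + 2 := by linarith
    have hηpos : 0 < η := div_pos hε hden
    -- choose δ with (μ (C δ)).toReal ≤ (μ Uᶜ).toReal + η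
    have h1 : Tendsto (fun k : ℕ => ((μ : Measure S) (C (1 / (k + 1)))).toReal) atTop
        (𝓝 (((μ : Measure S) Uᶜ).toReal)) :=
      (ENNReal.tendsto_toReal (measure_ne_top _ _)).comp hCtend
    obtain ⟨k₀, hk₀⟩ := Metric.tendsto_atTop.mp h1 η hηpos
    set δ : ℝ := 1 / ((k₀ : ℝ) + 1) with hδdef
    have hδpos : 0 < δ := by positivity
    have hUsubC : Uᶜ ⊆ C δ := fun y hy => by
      simp only [hC, Set.mem_setOf_eq, Metric.infDist_zero_of_mem hy]
      exact hδpos.le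
    have hμCδ : ((μ : Measure S) (C δ)).toReal ≤ ((μ : Measure S) Uᶜ).toReal + η := by
      have hd := hk₀ k₀ le_rfl
      rw [Real.dist_eq] at hd
      have := abs_lt.mp hd
      linarith [this.1, this.2]
    -- the cutoff function
    set u : S → ℝ := fun y => min 1 (Metric.infDist y Uᶜ / δ) with hu
    have hucont : Continuous u :=
      continuous_const.min ((Metric.continuous_infDist_pt _).div_const _)
    have hu0 : ∀ y ∈ (Uᶜ : Set S), u y = 0 := fun y hy => by
      simp [hu, Metric.infDist_zero_of_mem hy]
    have hunn : ∀ y, 0 ≤ u y := fun y =>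
      le_min zero_le_one (div_nonneg Metric.infDist_nonneg hδpos.le)
    have hule : ∀ y, u y ≤ 1 := fun y => min_le_left _ _
    have hu1 : ∀ y, y ∉ C δ → u y = 1 := by
      intro y hy
      have : δ < Metric.infDist y Uᶜ := by
        by_contra hcon
        exact hy (by simpa [hC, Set.mem_setOf_eq] using le_of_not_gt hcon)
      exact min_eq_left ((le_div_iff₀ hδpos).mpr (by linarith))
    set φt : S → ℝ := fun y => φ y * u y with hφt
    have hφtm : Measurable φt := hφm.mul hucont.measurable
    have hφtM : ∀ y, |φt y| ≤ M := fun y => by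
      rw [hφt, abs_mul, abs_of_nonneg (hunn y)]
      calc |φ y| * u y ≤ M * 1 :=
            mul_le_mul (hM y) (hule y) (hunn y) hMnn
        _ = M := mul_one M
    have hφtcont : Continuous φt := by
      rw [continuous_iff_continuousAt]
      intro y
      by_cases hy : y ∈ U
      · exact (hφc.continuousAt (hU.mem_nhds hy)).mul hucont.continuousAt
      · have hy' : y ∈ (Uᶜ : Set S) := hy
        have h0 : φt y = 0 := by simp [hφt, hu0 y hy']
        rw [ContinuousAt, h0]
        have h2 : Tendsto (fun y' => M * u y') (𝓝 y) (𝓝 (M * u y)) :=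
          (continuous_const.mul hucont).tendsto y
        rw [hu0 y hy', mul_zero] at h2
        refine squeeze_zero_norm (fun y' => ?_) h2
        rw [Real.norm_eq_abs, hφt]
        calc |φ y' * u y'| = |φ y'| * |u y'| := abs_mul _ _
          _ = |φ y'| * u y' := by rw [abs_of_nonneg (hunn y')]
          _ ≤ M * u y' := mul_le_mul_of_nonneg_right (hM y') (hunn y')
    set F : BoundedContinuousFunction S ℝ :=
      BoundedContinuousFunction.ofNormedAddCommGroup φt hφtcont M
        (by simpa [Real.norm_eq_abs] using hφtM) with hF
    -- the key approximation bound
    have hkey : ∀ (ν : Measure S), IsProbabilityMeasure ν →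
        |∫ y in U, φ y ∂ν - ∫ y, φt y ∂ν|
          ≤ M * ((ν (C δ)).toReal - (ν Uᶜ).toReal) := by
      intro ν hν
      have hint1 : Integrable φ (ν.restrict U) :=
        integrable_of_bounded'' hφm.aestronglyMeasurable hM
      have hint2 : Integrable φt ν :=
        integrable_of_bounded'' hφtm.aestronglyMeasurable hφtM
      have hsplit : ∫ y, φt y ∂ν = ∫ y in U, φt y ∂ν := by
        rw [← integral_add_compl hU.measurableSet hint2]
        have hz : ∫ y in Uᶜ, φt y ∂ν = 0 := by
          rw [setIntegral_congr_fun hUcclosed.measurableSet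
            (fun y hy => by simp [hφt, hu0 y hy] : Set.EqOn φt 0 Uᶜ)]
          simp
        rw [hz, add_zero]
      rw [hsplit, ← integral_sub hint1 hint2.restrict]
      have habs : |∫ y in U, (φ y - φt y) ∂ν| ≤ ∫ y in U, |φ y - φt y| ∂ν := by
        simpa [Real.norm_eq_abs] using
          norm_integral_le_integral_norm (μ := ν.restrict U) (f := fun y => φ y - φt y)
      refine le_trans habs ?_
      have hmono2 : ∫ y in U, |φ y - φt y| ∂ν
          ≤ ∫ y in U, (C δ).indicator (fun _ => M) y ∂ν := by
        refine setIntegral_mono_on ((hint1.sub hint2.restrict).abs) ?_ hU.measurableSet ?_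
        · exact (integrable_const M).indicator (hCmeas δ)
        · intro y hyU
          by_cases hyC : y ∈ C δ
          · rw [Set.indicator_of_mem hyC]
            have h1 : φ y - φt y = φ y * (1 - u y) := by rw [hφt]; ring
            rw [h1, abs_mul, abs_of_nonneg (show (0:ℝ) ≤ 1 - u y by linarith [hule y])]
            calc |φ y| * (1 - u y) ≤ M * 1 :=
                  mul_le_mul (hM y) (by linarith [hunn y])
                    (by linarith [hule y]) hMnn
              _ = M := mul_one M
          · rw [Set.indicator_of_notMem hyC]
            have h1 : u y = 1 := hu1 y hyC
            show |φ y - φ y * u y| ≤ 0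
            rw [h1, mul_one, sub_self, abs_zero]
      refine le_trans hmono2 ?_
      rw [integral_indicator_const _ (hCmeas δ), measureReal_def, Measure.restrict_apply (hCmeas δ)]
      have hCU : C δ ∩ U = C δ \ Uᶜ := by rw [Set.diff_eq, compl_compl]
      rw [smul_eq_mul, hCU, measure_diff hUsubC hUcclosed.measurableSet.nullMeasurableSet
        (measure_ne_top _ _), ENNReal.toReal_sub_of_le (measure_mono hUsubC) (measure_ne_top _ _)]
      exact le_of_eq (mul_comm _ _)
    -- eventualities
    have hFtend := ProbabilityMeasure.tendsto_iff_forall_integral_tendsto.mp hμ F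
    have hFcoe : ∀ (ν : Measure S), ∫ y, F y ∂ν = ∫ y, φt y ∂ν := fun ν => rfl
    obtain ⟨N₁, hN₁⟩ := Metric.tendsto_atTop.mp hFtend η hηpos
    obtain ⟨N₂, hN₂⟩ := Metric.tendsto_atTop.mp hcompl η hηpos
    have hclosed := ProbabilityMeasure.limsup_measure_closed_le_of_tendsto hμ (hCclosed δ)
    have hCev : ∀ᶠ n in atTop,
        ((μs n : Measure S) (C δ)) < (μ : Measure S) (C δ) + ENNReal.ofReal η := by
      refine eventually_lt_of_limsup_lt (lt_of_le_of_lt hclosed ?_)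
      exact ENNReal.lt_add_right (measure_ne_top _ _)
        (by simp [ENNReal.ofReal_eq_zero, not_le, hηpos])
    obtain ⟨N₃, hN₃⟩ := eventually_atTop.mp hCev
    refine ⟨max N₁ (max N₂ N₃), fun n hn => ?_⟩
    have hn₁ : N₁ ≤ n := le_trans (le_max_left _ _) hn
    have hn₂ : N₂ ≤ n := le_trans (le_max_left _ _) (le_trans (le_max_right _ _) hn)
    have hn₃ : N₃ ≤ n := le_trans (le_max_right _ _) (le_trans (le_max_right _ _) hn)
    have e1 : |∫ y, φt y ∂(μs n : Measure S) - ∫ y, φt y ∂(μ : Measure S)| < η := by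
      have := hN₁ n hn₁
      rw [Real.dist_eq, hFcoe, hFcoe] at this
      exact this
    have e2 : |((μs n : Measure S) Uᶜ).toReal - ((μ : Measure S) Uᶜ).toReal| < η := by
      have := hN₂ n hn₂
      rwa [Real.dist_eq] at this
    have e3 : ((μs n : Measure S) (C δ)).toReal
        ≤ ((μ : Measure S) (C δ)).toReal + η := by
      have := (hN₃ n hn₃).le
      calc ((μs n : Measure S) (C δ)).toReal
          ≤ (((μ : Measure S) (C δ)) + ENNReal.ofReal η).toReal :=
            ENNReal.toReal_mono (by simp [measure_ne_top, ENNReal.ofReal_ne_top]) this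
        _ = ((μ : Measure S) (C δ)).toReal + η := by
            rw [ENNReal.toReal_add (measure_ne_top _ _) ENNReal.ofReal_ne_top,
              ENNReal.toReal_ofReal hηpos.le]
    have k1 := hkey (μs n : Measure S) inferInstance
    have k2 := hkey (μ : Measure S) inferInstance
    have habs2 := abs_lt.mp e2
    rw [Real.dist_eq]
    have tri : |∫ y in U, φ y ∂(μs n : Measure S) - ∫ y in U, φ y ∂(μ : Measure S)|
        ≤ |∫ y in U, φ y ∂(μs n : Measure S) - ∫ y, φt y ∂(μs n : Measure S)|
          + |∫ y, φt y ∂(μs n : Measure S) - ∫ y, φt y ∂(μ : Measure S)|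
          + |∫ y, φt y ∂(μ : Measure S) - ∫ y in U, φ y ∂(μ : Measure S)| := by
      have := abs_sub_le (∫ y in U, φ y ∂(μs n : Measure S))
        (∫ y, φt y ∂(μs n : Measure S)) (∫ y in U, φ y ∂(μ : Measure S))
      have h2 := abs_sub_le (∫ y, φt y ∂(μs n : Measure S))
        (∫ y, φt y ∂(μ : Measure S)) (∫ y in U, φ y ∂(μ : Measure S))
      linarith
    have k2' : |∫ y, φt y ∂(μ : Measure S) - ∫ y in U, φ y ∂(μ : Measure S)|
        ≤ M * (((μ : Measure S) (C δ)).toReal - ((μ : Measure S) Uᶜ).toReal) := by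
      rw [abs_sub_comm]; exact k2
    -- numeric assembly
    have b1 : M * (((μs n : Measure S) (C δ)).toReal - ((μs n : Measure S) Uᶜ).toReal)
        ≤ M * (3 * η) := by
      apply mul_le_mul_of_nonneg_left _ hMnn
      linarith [habs2.1, habs2.2, e3, hμCδ]
    have b2 : M * (((μ : Measure S) (C δ)).toReal - ((μ : Measure S) Uᶜ).toReal)
        ≤ M * η := by
      apply mul_le_mul_of_nonneg_left _ hMnn
      linarith [hμCδ]
    have hηε : (4 * M + 1) * η < ε := by
      have : (4 * M + 2) * η = ε := by
        rw [hη]; field_simp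
      nlinarith [hηpos]
    calc |∫ y in U, φ y ∂(μs n : Measure S) - ∫ y in U, φ y ∂(μ : Measure S)|
        ≤ _ := tri
      _ < M * (3 * η) + η + M * η := by
          have := le_trans k1 b1
          have := le_trans k2' b2
          linarith
      _ ≤ (4 * M + 1) * η := by ring_nf; linarith
      _ < ε := hηε

lemma setIntegral_tendsto_of_locally_unif
    {μs : ℕ → ProbabilityMeasure S} {μ : ProbabilityMeasure S}
    (hμ : Tendsto μs atTop (𝓝 μ)) {U : Set S} (hU : IsOpen U)
    (hcompl : Tendsto (fun n => ((μs n : Measure S) Uᶜ).toReal) atTop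
      (𝓝 (((μ : Measure S) Uᶜ).toReal)))
    {φs : ℕ → S → ℝ} {φ : S → ℝ} (hφsm : ∀ n, Measurable (φs n)) (hφm : Measurable φ)
    {M : ℝ} (hMnn : 0 ≤ M) (hMs : ∀ n y, |φs n y| ≤ M) (hM : ∀ y, |φ y| ≤ M)
    (hloc : ∀ y ∈ U, ∀ ε > 0, ∃ V ∈ 𝓝 y, V ⊆ U ∧ ∃ N : ℕ,
      (∀ n ≥ N, ∀ y' ∈ V, |φs n y' - φ y| ≤ ε) ∧ (∀ y' ∈ V, |φ y' - φ y| ≤ ε)) :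
    Tendsto (fun n => ∫ y in U, φs n y ∂(μs n : Measure S)) atTop
      (𝓝 (∫ y in U, φ y ∂(μ : Measure S))) := by
  -- φ is continuous on U
  have hφc : ContinuousOn φ U := by
    intro y hy
    apply ContinuousAt.continuousWithinAt
    rw [Metric.continuousAt_iff']
    intro ε hε
    obtain ⟨V, hVnhds, _, _, _, h2⟩ := hloc y hy (ε / 2) (by linarith)
    filter_upwards [hVnhds] with y' hy'
    calc dist (φ y') (φ y) = |φ y' - φ y| := Real.dist_eq _ _
      _ ≤ ε / 2 := h2 y' hy'
      _ < ε := by linarith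
  have hbase := setIntegral_tendsto_of_continuousOn hμ hU hcompl hφm hM hφc
  -- it suffices to show the error term tends to zero
  have hsubm : ∀ n, Measurable fun y => φs n y - φ y := fun n => (hφsm n).sub hφm
  have hsubb : ∀ n y, |φs n y - φ y| ≤ 2 * M := by
    intro n y
    calc |φs n y - φ y| ≤ |φs n y| + |φ y| := abs_sub _ _
      _ ≤ M + M := add_le_add (hMs n y) (hM y)
      _ = 2 * M := by ring
  have habsb : ∀ n y, |(fun y => |φs n y - φ y|) y| ≤ 2 * M := by
    intro n y
    simpa [abs_abs] using hsubb n y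
  have hdecomp : ∀ n, ∫ y in U, φs n y ∂(μs n : Measure S)
      = (∫ y in U, φ y ∂(μs n : Measure S))
        + ∫ y in U, (φs n y - φ y) ∂(μs n : Measure S) := by
    intro n
    rw [← integral_add (integrable_of_bounded'' hφm.aestronglyMeasurable hM)
      (integrable_of_bounded'' (hsubm n).aestronglyMeasurable (hsubb n))]
    exact integral_congr_ae (Eventually.of_forall fun y => by ring)
  have herr : Tendsto (fun n => ∫ y in U, (φs n y - φ y) ∂(μs n : Measure S)) atTop (𝓝 0) := by
    have hDbound : ∀ n, ‖∫ y in U, (φs n y - φ y) ∂(μs n : Measure S)‖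
        ≤ ∫ y in U, |φs n y - φ y| ∂(μs n : Measure S) := by
      intro n
      simpa [Real.norm_eq_abs] using norm_integral_le_integral_norm
        (μ := (μs n : Measure S).restrict U) (f := fun y => φs n y - φ y)
    refine squeeze_zero_norm hDbound ?_
    -- show the L¹ errors tend to 0
    rw [Metric.tendsto_atTop]
    intro ε hε
    set η := ε / (6 * M + 3) with hη
    have hden : (0:ℝ) < 6 * M + 3 := by linarith
    have hηpos : 0 < η := div_pos hε hden
    choose V hVnhds hVsub N hN1 hN2 using fun (y : U) => hloc y y.2 η hηpos
    set W : ℕ → Set S := fun m => ⋃ (y : U) (_ : N y ≤ m), interior (V y) with hW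
    have hWopen : ∀ m, IsOpen (W m) := fun m =>
      isOpen_iUnion fun y => isOpen_iUnion fun _ => isOpen_interior
    have hWsub : ∀ m, W m ⊆ U := fun m =>
      Set.iUnion_subset fun y => Set.iUnion_subset fun _ =>
        le_trans interior_subset (hVsub y)
    have hWmono : Monotone W := by
      intro i j hij y hy
      obtain ⟨yy, hyy⟩ := Set.mem_iUnion.mp hy
      obtain ⟨hNy, hmem⟩ := Set.mem_iUnion.mp hyy
      exact Set.mem_iUnion.mpr ⟨yy, Set.mem_iUnion.mpr ⟨le_trans hNy hij, hmem⟩⟩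
    have hWunion : ⋃ m, W m = U := by
      apply le_antisymm
      · exact Set.iUnion_subset fun m => hWsub m
      · intro y hy
        refine Set.mem_iUnion.mpr ⟨N ⟨y, hy⟩, ?_⟩
        exact Set.mem_iUnion.mpr ⟨⟨y, hy⟩, Set.mem_iUnion.mpr
          ⟨le_rfl, mem_interior_iff_mem_nhds.mpr (hVnhds ⟨y, hy⟩)⟩⟩
    have hWtend : Tendsto (fun m => ((μ : Measure S) (W m)).toReal) atTop
        (𝓝 (((μ : Measure S) U).toReal)) := by
      have h0 := tendsto_measure_iUnion_atTop (μ := (μ : Measure S)) hWmono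
      rw [hWunion] at h0
      exact (ENNReal.tendsto_toReal (measure_ne_top _ _)).comp h0
    obtain ⟨m₀, hm₀⟩ := Metric.tendsto_atTop.mp hWtend η hηpos
    have hμUW : ((μ : Measure S) (U \ W m₀)).toReal ≤ η := by
      rw [measure_diff (hWsub m₀) (hWopen m₀).measurableSet.nullMeasurableSet
        (measure_ne_top _ _), ENNReal.toReal_sub_of_le (measure_mono (hWsub m₀))
        (measure_ne_top _ _)]
      have := hm₀ m₀ le_rfl
      rw [Real.dist_eq] at this
      have := abs_lt.mp this
      linarith [this.1]
    -- pointwise bound on W m₀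
    have hptwise : ∀ n ≥ m₀, ∀ y' ∈ W m₀, |φs n y' - φ y'| ≤ 2 * η := by
      intro n hn y' hy'
      obtain ⟨yy, hyy⟩ := Set.mem_iUnion.mp hy'
      obtain ⟨hNy, hmem⟩ := Set.mem_iUnion.mp hyy
      have hmemV : y' ∈ V yy := interior_subset hmem
      have h1 := hN1 yy n (le_trans hNy hn) y' hmemV
      have h2 := hN2 yy y' hmemV
      calc |φs n y' - φ y'| ≤ |φs n y' - φ yy| + |φ yy - φ y'| := abs_sub_le _ _ _
        _ ≤ η + η := add_le_add h1 (by rwa [abs_sub_comm])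
        _ = 2 * η := by ring
    -- portmanteau eventualities
    have hclosed := ProbabilityMeasure.limsup_measure_closed_le_of_tendsto hμ
      (hWopen m₀).isClosed_compl
    have hCev : ∀ᶠ n in atTop, ((μs n : Measure S) (W m₀)ᶜ)
        < (μ : Measure S) (W m₀)ᶜ + ENNReal.ofReal η := by
      refine eventually_lt_of_limsup_lt (lt_of_le_of_lt hclosed ?_)
      exact ENNReal.lt_add_right (measure_ne_top _ _)
        (by simp [ENNReal.ofReal_eq_zero, not_le, hηpos])
    obtain ⟨N₃, hN₃⟩ := eventually_atTop.mp hCev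
    obtain ⟨N₂, hN₂⟩ := Metric.tendsto_atTop.mp hcompl η hηpos
    refine ⟨max m₀ (max N₂ N₃), fun n hn => ?_⟩
    have hn₁ : m₀ ≤ n := le_trans (le_max_left _ _) hn
    have hn₂ : N₂ ≤ n := le_trans (le_max_left _ _) (le_trans (le_max_right _ _) hn)
    have hn₃ : N₃ ≤ n := le_trans (le_max_right _ _) (le_trans (le_max_right _ _) hn)
    set ν : Measure S := (μs n : Measure S) with hν
    -- bound the integral by splitting over W m₀
    have hsplitset : ∫ y in U, |φs n y - φ y| ∂ν
        = (∫ y in U ∩ W m₀, |φs n y - φ y| ∂ν) + ∫ y in U \ W m₀, |φs n y - φ y| ∂ν := by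
      rw [← integral_inter_add_diff (hWopen m₀).measurableSet
        (integrable_of_bounded'' ((hsubm n).abs).aestronglyMeasurable (habsb n)).restrict]
    have hb1 : ∫ y in U ∩ W m₀, |φs n y - φ y| ∂ν ≤ 2 * η := by
      have hle : ∫ y in U ∩ W m₀, |φs n y - φ y| ∂ν ≤ ∫ _ in U ∩ W m₀, 2 * η ∂ν := by
        refine setIntegral_mono_on ?_ (integrable_const _)
          (hU.measurableSet.inter (hWopen m₀).measurableSet) ?_
        · exact (integrable_of_bounded'' ((hsubm n).abs).aestronglyMeasurable (habsb n)).restrict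
        · exact fun y hy => hptwise n hn₁ y hy.2
      refine le_trans hle ?_
      rw [setIntegral_const, smul_eq_mul, measureReal_def]
      have h1 : (ν (U ∩ W m₀)).toReal ≤ 1 := by
        haveI : IsProbabilityMeasure ν := inferInstance
        calc (ν (U ∩ W m₀)).toReal ≤ (ν Set.univ).toReal :=
              ENNReal.toReal_mono (measure_ne_top _ _) (measure_mono (Set.subset_univ _))
          _ = 1 := by simp
      nlinarith [hηpos.le]
    have hb2 : ∫ y in U \ W m₀, |φs n y - φ y| ∂ν ≤ 2 * M * (ν (U \ W m₀)).toReal := by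
      have hle : ∫ y in U \ W m₀, |φs n y - φ y| ∂ν ≤ ∫ _ in U \ W m₀, 2 * M ∂ν := by
        refine setIntegral_mono_on ?_ (integrable_const _)
          (hU.measurableSet.diff (hWopen m₀).measurableSet) ?_
        · exact (integrable_of_bounded'' ((hsubm n).abs).aestronglyMeasurable (habsb n)).restrict
        · intro y _
          calc |φs n y - φ y| ≤ |φs n y| + |φ y| := abs_sub _ _
            _ ≤ M + M := add_le_add (hMs n y) (hM y)
            _ = 2 * M := by ring
      refine le_trans hle ?_
      rw [setIntegral_const, smul_eq_mul]
      exact le_of_eq (mul_comm _ _)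
    -- control ν (U \ W m₀)
    have hsub1 : U \ W m₀ ⊆ (W m₀)ᶜ := fun y hy => hy.2
    have hUWeq : U \ W m₀ = (W m₀)ᶜ \ Uᶜ := by
      ext y
      simp only [Set.mem_diff, Set.mem_compl_iff]
      tauto
    have hsub2 : (Uᶜ : Set S) ⊆ (W m₀)ᶜ := fun y hy hyW => hy (hWsub m₀ hyW)
    have hνUW : (ν (U \ W m₀)).toReal ≤ 3 * η := by
      rw [hUWeq, measure_diff hsub2
        hU.isClosed_compl.measurableSet.nullMeasurableSet (measure_ne_top _ _),
        ENNReal.toReal_sub_of_le (measure_mono hsub2) (measure_ne_top _ _)]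
      have e2 : |(ν Uᶜ).toReal - ((μ : Measure S) Uᶜ).toReal| < η := by
        have := hN₂ n hn₂
        rwa [Real.dist_eq] at this
      have e3 : (ν (W m₀)ᶜ).toReal ≤ ((μ : Measure S) (W m₀)ᶜ).toReal + η := by
        have hlt := (hN₃ n hn₃).le
        calc (ν (W m₀)ᶜ).toReal ≤ (((μ : Measure S) (W m₀)ᶜ) + ENNReal.ofReal η).toReal :=
              ENNReal.toReal_mono (by simp [measure_ne_top, ENNReal.ofReal_ne_top]) hlt
          _ = ((μ : Measure S) (W m₀)ᶜ).toReal + η := by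
              rw [ENNReal.toReal_add (measure_ne_top _ _) ENNReal.ofReal_ne_top,
                ENNReal.toReal_ofReal hηpos.le]
      have e4 : ((μ : Measure S) (W m₀)ᶜ).toReal
          ≤ ((μ : Measure S) Uᶜ).toReal + η := by
        have hWcompl : ((W m₀)ᶜ : Set S) = Uᶜ ∪ (U \ W m₀) := by
          ext y
          simp only [Set.mem_compl_iff, Set.mem_union, Set.mem_diff]
          by_cases hyU : y ∈ U
          · constructor
            · intro h; exact Or.inr ⟨hyU, h⟩
            · rintro (h | ⟨_, h⟩) hW
              · exact h hyU
              · exact h hW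
          · constructor
            · intro _; exact Or.inl hyU
            · intro _ hW; exact hyU (hWsub m₀ hW)
        rw [hWcompl, measure_union (by
          refine Set.disjoint_left.mpr fun y hy hy2 => hy hy2.1) 
          ((hU.measurableSet.diff (hWopen m₀).measurableSet)),
          ENNReal.toReal_add (measure_ne_top _ _) (measure_ne_top _ _)]
        linarith [hμUW]
      have habs := abs_lt.mp e2
      linarith [habs.1, e3, e4]
    calc dist (∫ y in U, |φs n y - φ y| ∂ν) 0
        = |∫ y in U, |φs n y - φ y| ∂ν| := by rw [Real.dist_eq, sub_zero]
      _ = ∫ y in U, |φs n y - φ y| ∂ν := by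
          rw [abs_of_nonneg (integral_nonneg fun y => abs_nonneg _)]
      _ ≤ 2 * η + 2 * M * (ν (U \ W m₀)).toReal := by
          rw [hsplitset]; exact add_le_add hb1 hb2
      _ ≤ 2 * η + 2 * M * (3 * η) := by
          have := mul_le_mul_of_nonneg_left hνUW (by linarith : (0:ℝ) ≤ 2 * M)
          linarith
      _ < ε := by
          have : (6 * M + 3) * η = ε := by rw [hη]; field_simp
          nlinarith [hηpos]
  have := hbase.add herr
  rw [add_zero] at this
  refine this.congr fun n => (hdecomp n).symm

lemma integral_tendsto_of_tendsto_of_continuous {T : Type*} [TopologicalSpace T]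
    {μs : ℕ → ProbabilityMeasure S} {μ : ProbabilityMeasure S}
    (hμ : Tendsto μs atTop (𝓝 μ)) {ts : ℕ → T} {t : T} (ht : Tendsto ts atTop (𝓝 t))
    {φ : T × S → ℝ} (hφ : Continuous φ) {M : ℝ} (hM : ∀ p, |φ p| ≤ M) :
    Tendsto (fun n => ∫ y, φ (ts n, y) ∂(μs n : Measure S)) atTop
      (𝓝 (∫ y, φ (t, y) ∂(μ : Measure S))) := by
  have hMnn : 0 ≤ M := by
    obtain ⟨y⟩ := Measure.nonempty_of_neZero (μ : Measure S)
    exact le_trans (abs_nonneg _) (hM (t, y))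
  have key := setIntegral_tendsto_of_locally_unif (U := Set.univ) hμ isOpen_univ
    (by simp only [Set.compl_univ, measure_empty]; exact tendsto_const_nhds)
    (φs := fun n y => φ (ts n, y)) (φ := fun y => φ (t, y))
    (fun n => (hφ.comp (Continuous.prodMk_right (ts n))).measurable)
    (hφ.comp (Continuous.prodMk_right t)).measurable
    hMnn (fun n y => hM _) (fun y => hM _) ?_
  · simpa [Measure.restrict_univ] using key
  · intro y _ ε hε
    have hcont : {p : T × S | |φ p - φ (t, y)| ≤ ε} ∈ 𝓝 (t, y) := by
      have : ContinuousAt φ (t, y) := hφ.continuousAt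
      have h2 : ∀ᶠ p in 𝓝 (t, y), |φ p - φ (t, y)| ≤ ε := by
        have h3 : Tendsto (fun p => |φ p - φ (t, y)|) (𝓝 (t, y)) (𝓝 |φ (t, y) - φ (t, y)|) :=
          ((this.sub tendsto_const_nhds).abs)
        rw [sub_self, abs_zero] at h3
        exact h3.eventually_le_const hε
      exact h2
    rw [mem_nhds_prod_iff] at hcont
    obtain ⟨u, hu, v, hv, huv⟩ := hcont
    obtain ⟨N, hN⟩ := eventually_atTop.mp (ht.eventually hu)
    refine ⟨v, hv, Set.subset_univ _, N, ?_, ?_⟩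
    · intro n hn y' hy'
      exact huv (Set.mk_mem_prod (hN n hn) hy')
    · intro y' hy'
      exact huv (Set.mk_mem_prod (mem_of_mem_nhds hu) hy')

lemma continuous_integral_param {T : Type*} [MetricSpace T]
    {κ : T → ProbabilityMeasure S} (hκ : Continuous κ)
    {φ : T × S → ℝ} (hφ : Continuous φ) {M : ℝ} (hM : ∀ p, |φ p| ≤ M) :
    Continuous fun t => ∫ y, φ (t, y) ∂(κ t : Measure S) := by
  apply SeqContinuous.continuous
  intro ts t hts
  exact integral_tendsto_of_tendsto_of_continuous ((hκ.tendsto _).comp hts) hts hφ hM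

end AuxWeakConv

section AuxBind
variable {α β : Type*} [MeasurableSpace α] [MeasurableSpace β]

lemma abs_integral_le_of_bounded {ν : Measure β} [IsProbabilityMeasure ν] {f : β → ℝ}
    (hf : AEStronglyMeasurable f ν) {M : ℝ} (hMnn : 0 ≤ M) (hM : ∀ y, |f y| ≤ M) :
    |∫ y, f y ∂ν| ≤ M := by
  calc |∫ y, f y ∂ν| ≤ ∫ y, |f y| ∂ν := by
        simpa [Real.norm_eq_abs] using norm_integral_le_integral_norm (μ := ν) (f := f)
    _ ≤ ∫ _, M ∂ν := integral_mono (integrable_of_bounded'' hf hM).abs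
        (integrable_const M) (fun y => hM y)
    _ = M := by simp

end AuxBind



set_option maxHeartbeats 4000000 in
/-- **Corollary (countable nontransparent part).**
Let `Y = Y₁ ∪ Y₂` be a partition into disjoint Borel sets with `Y₁` open and `Y₂`
countable. If (a) `P` and `Q` are weakly continuous, (b) `(a,x) ↦ Q({y}|a,x)` is
continuous for every `y ∈ Y₂`, and (c) there is a stochastic kernel `H` satisfying (3.4)
whose restriction to `P(X)×A×Y₁` is weakly continuous, then the transition kernel `q` of
the COMDP is weakly continuous. -/
theorem qker_weakly_continuous_countable_part {X Y A : Type*}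
    [MetricSpace X] [SecondCountableTopology X] [MeasurableSpace X] [BorelSpace X]
    [MetricSpace Y] [SecondCountableTopology Y] [MeasurableSpace Y] [BorelSpace Y]
    [MetricSpace A] [SecondCountableTopology A] [MeasurableSpace A] [BorelSpace A]
    (P : X × A → ProbabilityMeasure X) (Q : A × X → ProbabilityMeasure Y)
    (hPmeas : Measurable fun p => (P p : Measure X))
    (hQmeas : Measurable fun p => (Q p : Measure Y))
    (Y₁ Y₂ : Set Y) (hY₁open : IsOpen Y₁) (hY₂meas : MeasurableSet Y₂)
    (hY₂count : Y₂.Countable)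
    (hdisj : Disjoint Y₁ Y₂) (hpart : Y₁ ∪ Y₂ = Set.univ)
    -- (a) weak continuity of P and Q
    (hPcont : Continuous P) (hQcont : Continuous Q)
    -- (b) continuity of Q({y}|a,x) for y ∈ Y₂
    (hQy : ∀ y ∈ Y₂, Continuous fun p : A × X => ((Q p) {y} : ℝ))
    -- (c) the filtering kernel H, weakly continuous on P(X) × A × Y₁
    (H : ProbabilityMeasure X × A × Y → ProbabilityMeasure X)
    (hHmeas : Measurable H)
    (hHdis : Disint P Q H)
    (hHcont : ContinuousOn H {t : ProbabilityMeasure X × A × Y | t.2.2 ∈ Y₁}) :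
    ∀ (zs : ℕ → ProbabilityMeasure X) (z : ProbabilityMeasure X) (as : ℕ → A) (a : A),
      Tendsto zs atTop (𝓝 z) → Tendsto as atTop (𝓝 a) →
      ∀ f : BoundedContinuousFunction (ProbabilityMeasure X) ℝ,
        Tendsto (fun n => ∫ ζ, f ζ ∂(qker P Q H (zs n) (as n))) atTop
          (𝓝 (∫ ζ, f ζ ∂(qker P Q H z a))) := by
  intro zs z as a hz ha f
  -- basic set facts
  have hY2eq : Y₂ = Y₁ᶜ := by
    ext y
    constructor
    · intro hy hy1
      exact Set.disjoint_left.mp hdisj hy1 hy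
    · intro hy
      rcases (Set.eq_univ_iff_forall.mp hpart y) with h | h
      · exact absurd h hy
      · exact h
  have hY2closed : IsClosed Y₂ := by rw [hY2eq]; exact hY₁open.isClosed_compl
  -- measurability of the kernel slices
  have hPk : ∀ b : A, Measurable fun x => (P (x, b) : Measure X) :=
    fun b => hPmeas.comp (measurable_id.prodMk measurable_const)
  have hQk : ∀ b : A, Measurable fun x' => (Q (b, x') : Measure Y) :=
    fun b => hQmeas.comp (measurable_const.prodMk measurable_id)
  -- probability instances
  have hmprob : ∀ (ζ : ProbabilityMeasure X) (b : A),
      IsProbabilityMeasure ((ζ : Measure X).bind fun x => (P (x, b) : Measure X)) :=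
    fun ζ b => isProbabilityMeasure_bind (hPk b) (fun x => inferInstance)
  have hRprob : ∀ (ζ : ProbabilityMeasure X) (b : A), IsProbabilityMeasure (RprimeM P Q ζ b) := by
    intro ζ b
    haveI := hmprob ζ b
    exact isProbabilityMeasure_bind (hQk b) (fun x => inferInstance)
  set Rp : ProbabilityMeasure X → A → ProbabilityMeasure Y :=
    fun ζ b => ⟨RprimeM P Q ζ b, hRprob ζ b⟩ with hRpdef
  have hXne : Nonempty X := Measure.nonempty_of_neZero (z : Measure X)
  -- iterated-integral formula for R'
  have hIB : ∀ (ζ : ProbabilityMeasure X) (b : A) (g : Y → ℝ), Continuous g →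
      ∀ {M : ℝ}, 0 ≤ M → (∀ y, |g y| ≤ M) →
      ∫ y, g y ∂(RprimeM P Q ζ b)
        = ∫ x, (∫ x', (∫ y, g y ∂(Q (b, x') : Measure Y)) ∂(P (x, b) : Measure X))
            ∂(ζ : Measure X) := by
    intro ζ b g hg M hMnn hM
    haveI := hmprob ζ b
    have hψc : Continuous fun x' => ∫ y, g y ∂(Q (b, x') : Measure Y) := by
      set gb : BoundedContinuousFunction Y ℝ :=
        BoundedContinuousFunction.ofNormedAddCommGroup g hg M
          (by simpa [Real.norm_eq_abs] using hM) with hgb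
      have h1 : Continuous fun μ : ProbabilityMeasure Y => ∫ y, gb y ∂(μ : Measure Y) :=
        ProbabilityMeasure.continuous_integral_boundedContinuousFunction gb
      exact (h1.comp hQcont).comp (continuous_const.prodMk continuous_id)
    have hψb : ∀ x', |∫ y, g y ∂(Q (b, x') : Measure Y)| ≤ M := fun x' =>
      abs_integral_le_of_bounded hg.measurable.aestronglyMeasurable hMnn hM
    have e1 : ∫ y, g y ∂(RprimeM P Q ζ b)
        = ∫ x', (∫ y, g y ∂(Q (b, x') : Measure Y))
            ∂((ζ : Measure X).bind fun x => (P (x, b) : Measure X)) :=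
      integral_bind_of_bounded (hQk b) (fun _ => inferInstance) hg.measurable hM
    rw [e1]
    exact integral_bind_of_bounded (hPk b) (fun _ => inferInstance)
      hψc.measurable hψb
  -- continuity/limit helpers for parametric integrals over P
  have hΦcont : ∀ (θ : A × X → ℝ), Continuous θ → ∀ {M : ℝ}, (∀ p, |θ p| ≤ M) →
      Continuous (fun p : A × X => ∫ x', θ (p.1, x') ∂(P (p.2, p.1) : Measure X)) := by
    intro θ hθ M hM
    apply SeqContinuous.continuous
    intro ps p hps
    have h1 : Tendsto (fun m => P ((ps m).2, (ps m).1)) atTop (𝓝 (P (p.2, p.1))) :=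
      (hPcont.tendsto _).comp (((continuous_snd.prodMk continuous_fst).tendsto p).comp hps)
    exact integral_tendsto_of_tendsto_of_continuous h1 hps
      (φ := fun q : (A × X) × X => θ (q.1.1, q.2))
      (hθ.comp ((continuous_fst.comp continuous_fst).prodMk continuous_snd))
      (fun q => hM _)
  have houter : ∀ (θ : A × X → ℝ), Continuous θ → ∀ {M : ℝ}, (∀ p, |θ p| ≤ M) →
      Tendsto (fun n => ∫ x, θ (as n, x) ∂(zs n : Measure X)) atTop
        (𝓝 (∫ x, θ (a, x) ∂(z : Measure X))) := by
    intro θ hθ M hM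
    exact integral_tendsto_of_tendsto_of_continuous hz ha
      (φ := fun q : A × X => θ (q.1, q.2)) (by simpa using hθ) (fun q => hM _)
  -- weak convergence of the marginals R'
  have hRtend : Tendsto (fun n => Rp (zs n) (as n)) atTop (𝓝 (Rp z a)) := by
    rw [ProbabilityMeasure.tendsto_iff_forall_integral_tendsto]
    intro g
    have hgb : ∀ y, |g y| ≤ ‖g‖ := fun y => by
      simpa [Real.norm_eq_abs] using g.norm_coe_le_norm y
    set ψ : A × X → ℝ := fun p => ∫ y, g y ∂(Q p : Measure Y) with hψdef
    have hψc : Continuous ψ :=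
      (ProbabilityMeasure.continuous_integral_boundedContinuousFunction g).comp hQcont
    have hψb : ∀ p, |ψ p| ≤ ‖g‖ := fun p =>
      abs_integral_le_of_bounded g.continuous.measurable.aestronglyMeasurable
        (norm_nonneg g) hgb
    set Φ : A × X → ℝ := fun p => ∫ x', ψ (p.1, x') ∂(P (p.2, p.1) : Measure X) with hΦdef
    have hΦc : Continuous Φ := hΦcont ψ hψc hψb
    have hΦb : ∀ p, |Φ p| ≤ ‖g‖ := fun p => by
      haveI : IsProbabilityMeasure (P (p.2, p.1) : Measure X) := inferInstance
      exact abs_integral_le_of_bounded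
        ((hψc.comp (continuous_const.prodMk continuous_id)).measurable.aestronglyMeasurable)
        (norm_nonneg g) (fun x' => hψb _)
    have hrw : ∀ (ζ : ProbabilityMeasure X) (b : A),
        ∫ y, g y ∂((Rp ζ b : Measure Y)) = ∫ x, Φ (b, x) ∂(ζ : Measure X) :=
      fun ζ b => hIB ζ b g g.continuous (norm_nonneg g) hgb
    have hfin := houter Φ hΦc hΦb
    refine Tendsto.congr (fun n => (hrw (zs n) (as n)).symm) ?_
    rw [hrw z a]
    exact hfin
  -- convergence of atoms
  have hrE : ∀ y ∈ Y₂, Tendsto (fun n => RprimeM P Q (zs n) (as n) {y}) atTop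
      (𝓝 (RprimeM P Q z a {y})) := by
    intro y hy
    set qy : A × X → ℝ := fun p => ((Q p : Measure Y) {y}).toReal with hqydef
    have hqyeq : ∀ p, ((Q p) {y} : ℝ) = qy p := by
      intro p
      show _ = ((Q p : Measure Y) {y}).toReal
      rw [← ProbabilityMeasure.ennreal_coeFn_eq_coeFn_toMeasure, ENNReal.coe_toReal]
    have hqyc : Continuous qy := by
      have h0 := hQy y hy
      rw [show qy = (fun p => ((Q p) {y} : ℝ)) from funext fun p => (hqyeq p).symm]
      exact h0
    have hqyb : ∀ p, |qy p| ≤ 1 := by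
      intro p
      rw [abs_of_nonneg ENNReal.toReal_nonneg]
      have h1 : (Q p : Measure Y) {y} ≤ 1 := prob_le_one
      exact le_trans (ENNReal.toReal_mono ENNReal.one_ne_top h1) (by simp)
    have hval : ∀ (ζ : ProbabilityMeasure X) (b : A), (RprimeM P Q ζ b {y}).toReal
        = ∫ x, (∫ x', qy (b, x') ∂(P (x, b) : Measure X)) ∂(ζ : Measure X) := by
      intro ζ b
      haveI := hmprob ζ b
      have h1 : RprimeM P Q ζ b {y}
          = ∫⁻ x', (Q (b, x') : Measure Y) {y}
              ∂((ζ : Measure X).bind fun x => (P (x, b) : Measure X)) :=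
        Measure.bind_apply (measurableSet_singleton y) (hQk b).aemeasurable
      have h2 : ∫ x', qy (b, x') ∂((ζ : Measure X).bind fun x => (P (x, b) : Measure X))
          = (∫⁻ x', (Q (b, x') : Measure Y) {y}
              ∂((ζ : Measure X).bind fun x => (P (x, b) : Measure X))).toReal := by
        refine integral_toReal ?_ ?_
        · exact ((Measure.measurable_coe (measurableSet_singleton y)).comp (hQk b)).aemeasurable
        · exact Eventually.of_forall fun x' => measure_lt_top _ _
      have h3 : ∫ x', qy (b, x') ∂((ζ : Measure X).bind fun x => (P (x, b) : Measure X))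
          = ∫ x, (∫ x', qy (b, x') ∂(P (x, b) : Measure X)) ∂(ζ : Measure X) :=
        integral_bind_of_bounded (hPk b) (fun _ => inferInstance)
          (hqyc.comp (continuous_const.prodMk continuous_id)).measurable
          (fun x' => hqyb _)
      rw [h1, ← h2, h3]
    have hΦyb : ∀ p : A × X, |∫ x', qy (p.1, x') ∂(P (p.2, p.1) : Measure X)| ≤ 1 := by
      intro p
      haveI : IsProbabilityMeasure (P (p.2, p.1) : Measure X) := inferInstance
      exact abs_integral_le_of_bounded
        ((hqyc.comp (continuous_const.prodMk continuous_id)).measurable.aestronglyMeasurable)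
        zero_le_one (fun x' => hqyb _)
    have hreal := houter (fun p => ∫ x', qy (p.1, x') ∂(P (p.2, p.1) : Measure X))
      (hΦcont qy hqyc hqyb) hΦyb
    have hreal' : Tendsto (fun n => (RprimeM P Q (zs n) (as n) {y}).toReal) atTop
        (𝓝 ((RprimeM P Q z a {y}).toReal)) := by
      refine Tendsto.congr (fun n => (hval (zs n) (as n)).symm) ?_
      rw [hval z a]
      exact hreal
    rw [← ENNReal.tendsto_toReal_iff (fun n => measure_ne_top _ _) (measure_ne_top _ _)]
    exact hreal'
  -- measure of the countable part as a sum
  have hsumY2 : ∀ (ζ : ProbabilityMeasure X) (b : A),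
      (RprimeM P Q ζ b) Y₂ = ∑' (y : ↥Y₂), RprimeM P Q ζ b {(y : Y)} := by
    intro ζ b
    have h1 : Y₂ = ⋃ y ∈ Y₂, {y} := by simp
    conv_lhs => rw [h1]
    exact measure_biUnion hY₂count (fun y _ z _ hyz => by simp [hyz])
      (fun y _ => measurableSet_singleton y)
  haveI hcY2 : Countable ↥Y₂ := hY₂count.to_subtype
  -- convergence of the mass of the countable part
  have hcoeR : ∀ (ζ : ProbabilityMeasure X) (b : A), (Rp ζ b : Measure Y) = RprimeM P Q ζ b :=
    fun ζ b => rfl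
  have hY2tend : Tendsto (fun n => (RprimeM P Q (zs n) (as n)) Y₂) atTop
      (𝓝 ((RprimeM P Q z a) Y₂)) := by
    have hlimsup : limsup (fun n => (RprimeM P Q (zs n) (as n)) Y₂) atTop
        ≤ (RprimeM P Q z a) Y₂ := by
      have h0 := ProbabilityMeasure.limsup_measure_closed_le_of_tendsto hRtend hY2closed
      simpa [hcoeR] using h0
    have hfatou : (RprimeM P Q z a) Y₂
        ≤ liminf (fun n => (RprimeM P Q (zs n) (as n)) Y₂) atTop := by
      have h1 : ∀ (ζ : ProbabilityMeasure X) (b : A), (RprimeM P Q ζ b) Y₂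
          = ∫⁻ (y : ↥Y₂), RprimeM P Q ζ b {(y : Y)} ∂Measure.count := by
        intro ζ b
        rw [hsumY2 ζ b, ← lintegral_count]
      calc (RprimeM P Q z a) Y₂
          = ∫⁻ (y : ↥Y₂), RprimeM P Q z a {(y : Y)} ∂Measure.count := h1 z a
        _ = ∫⁻ (y : ↥Y₂), liminf (fun n => RprimeM P Q (zs n) (as n) {(y : Y)}) atTop
              ∂Measure.count := by
            refine lintegral_congr fun y => ?_
            exact ((hrE y y.2).liminf_eq).symm
        _ ≤ liminf (fun n => ∫⁻ (y : ↥Y₂), RprimeM P Q (zs n) (as n) {(y : Y)}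
              ∂Measure.count) atTop := lintegral_liminf_le (fun n => measurable_of_countable _)
        _ = liminf (fun n => (RprimeM P Q (zs n) (as n)) Y₂) atTop := by
            congr 1
            funext n
            rw [← h1]
    exact tendsto_of_le_liminf_of_limsup_le hfatou hlimsup
  have hfinsum : ∀ (ζ : ProbabilityMeasure X) (b : A),
      ∑' (y : ↥Y₂), RprimeM P Q ζ b {(y : Y)} ≠ ∞ := by
    intro ζ b
    rw [← hsumY2]
    exact measure_ne_top _ _
  have hsummable : ∀ (ζ : ProbabilityMeasure X) (b : A),
      Summable fun y : ↥Y₂ => (RprimeM P Q ζ b {(y : Y)}).toReal :=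
    fun ζ b => ENNReal.summable_toReal (hfinsum ζ b)
  have hsum_eq : ∀ (ζ : ProbabilityMeasure X) (b : A),
      ∑' (y : ↥Y₂), (RprimeM P Q ζ b {(y : Y)}).toReal = ((RprimeM P Q ζ b) Y₂).toReal := by
    intro ζ b
    rw [hsumY2 ζ b, ENNReal.tsum_toReal_eq (fun _ => measure_ne_top _ _)]
  have hrEreal : ∀ y ∈ Y₂, Tendsto (fun n => (RprimeM P Q (zs n) (as n) {y}).toReal) atTop
      (𝓝 ((RprimeM P Q z a {y}).toReal)) := fun y hy =>
    (ENNReal.tendsto_toReal_iff (fun n => measure_ne_top _ _) (measure_ne_top _ _)).mpr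
      (hrE y hy)
  have hY2tendReal : Tendsto (fun n => ((RprimeM P Q (zs n) (as n)) Y₂).toReal) atTop
      (𝓝 (((RprimeM P Q z a) Y₂).toReal)) :=
    (ENNReal.tendsto_toReal_iff (fun n => measure_ne_top _ _) (measure_ne_top _ _)).mpr hY2tend
  -- ℓ¹ convergence of the atom masses
  have hl1 : Tendsto (fun n => ∑' (y : ↥Y₂),
      |(RprimeM P Q (zs n) (as n) {(y : Y)}).toReal - (RprimeM P Q z a {(y : Y)}).toReal|)
      atTop (𝓝 0) := by
    set rn : ℕ → ↥Y₂ → ℝ := fun n y => (RprimeM P Q (zs n) (as n) {(y : Y)}).toReal with hrn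
    set r0 : ↥Y₂ → ℝ := fun y => (RprimeM P Q z a {(y : Y)}).toReal with hr0
    have hpt : ∀ y : ↥Y₂, Tendsto (fun n => rn n y) atTop (𝓝 (r0 y)) :=
      fun y => hrEreal y y.2
    have hmin : Tendsto (fun n => ∑' (y : ↥Y₂), min (rn n y) (r0 y)) atTop
        (𝓝 (∑' (y : ↥Y₂), r0 y)) := by
      have hb : ∀ᶠ n in atTop, ∀ y : ↥Y₂, ‖min (rn n y) (r0 y)‖ ≤ r0 y :=
        Eventually.of_forall fun n y => by
          rw [Real.norm_eq_abs,
            abs_of_nonneg (le_min ENNReal.toReal_nonneg ENNReal.toReal_nonneg)]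
          exact min_le_right _ _
      have hab : ∀ y : ↥Y₂, Tendsto (fun n => min (rn n y) (r0 y)) atTop (𝓝 (r0 y)) := by
        intro y
        have h2 := (hpt y).min (tendsto_const_nhds (x := r0 y) (f := atTop))
        simpa [min_self] using h2
      exact tendsto_tsum_of_dominated_convergence (hsummable z a) hab hb
    have htotal : Tendsto (fun n => ∑' (y : ↥Y₂), rn n y) atTop
        (𝓝 (∑' (y : ↥Y₂), r0 y)) := by
      have h1 : (fun n => ∑' (y : ↥Y₂), rn n y)
          = fun n => ((RprimeM P Q (zs n) (as n)) Y₂).toReal := by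
        funext n
        exact hsum_eq (zs n) (as n)
      rw [h1, hr0]
      have h2 : ∑' (y : ↥Y₂), (RprimeM P Q z a {(y : Y)}).toReal
          = ((RprimeM P Q z a) Y₂).toReal := hsum_eq z a
      rw [h2]
      exact hY2tendReal
    have habs_eq : ∀ n, ∑' (y : ↥Y₂), |rn n y - r0 y|
        = ((∑' (y : ↥Y₂), rn n y) + ∑' (y : ↥Y₂), r0 y)
          - 2 * ∑' (y : ↥Y₂), min (rn n y) (r0 y) := by
      intro n
      have h1 : ∀ y : ↥Y₂, |rn n y - r0 y| = rn n y + r0 y - 2 * min (rn n y) (r0 y) := by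
        intro y
        rcases le_total (rn n y) (r0 y) with h | h
        · rw [abs_of_nonpos (by linarith), min_eq_left h]; ring
        · rw [abs_of_nonneg (by linarith), min_eq_right h]; ring
      have hsmin : Summable fun y : ↥Y₂ => min (rn n y) (r0 y) :=
        Summable.of_nonneg_of_le
          (fun y => le_min ENNReal.toReal_nonneg ENNReal.toReal_nonneg)
          (fun y => min_le_right _ _) (hsummable z a)
      calc ∑' (y : ↥Y₂), |rn n y - r0 y|
          = ∑' (y : ↥Y₂), (rn n y + r0 y - 2 * min (rn n y) (r0 y)) := tsum_congr h1
        _ = (∑' (y : ↥Y₂), (rn n y + r0 y)) - ∑' (y : ↥Y₂), 2 * min (rn n y) (r0 y) :=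
            Summable.tsum_sub ((hsummable (zs n) (as n)).add (hsummable z a)) (hsmin.mul_left 2)
        _ = ((∑' (y : ↥Y₂), rn n y) + ∑' (y : ↥Y₂), r0 y)
              - 2 * ∑' (y : ↥Y₂), min (rn n y) (r0 y) := by
            rw [Summable.tsum_add (hsummable (zs n) (as n)) (hsummable z a), tsum_mul_left]
    have hlim : Tendsto (fun n => ((∑' (y : ↥Y₂), rn n y) + ∑' (y : ↥Y₂), r0 y)
        - 2 * ∑' (y : ↥Y₂), min (rn n y) (r0 y)) atTop
        (𝓝 (((∑' (y : ↥Y₂), r0 y) + ∑' (y : ↥Y₂), r0 y)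
          - 2 * ∑' (y : ↥Y₂), r0 y)) :=
      (htotal.add tendsto_const_nhds).sub (hmin.const_mul 2)
    have hz0 : ((∑' (y : ↥Y₂), r0 y) + ∑' (y : ↥Y₂), r0 y) - 2 * ∑' (y : ↥Y₂), r0 y
        = 0 := by ring
    rw [hz0] at hlim
    exact Tendsto.congr (fun n => (habs_eq n).symm) hlim
  -- weak continuity of the filter at the atoms
  have hHatom : ∀ y ∈ Y₂, RprimeM P Q z a {y} ≠ 0 →
      Tendsto (fun n => H (zs n, as n, y)) atTop (𝓝 (H (z, a, y))) := by
    intro y hy hr0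
    set qy : A × X → ℝ := fun p => ((Q p : Measure Y) {y}).toReal with hqydef
    have hqyeq : ∀ p, ((Q p) {y} : ℝ) = qy p := by
      intro p
      show _ = ((Q p : Measure Y) {y}).toReal
      rw [← ProbabilityMeasure.ennreal_coeFn_eq_coeFn_toMeasure, ENNReal.coe_toReal]
    have hqyc : Continuous qy := by
      have h0 := hQy y hy
      rw [show qy = (fun p => ((Q p) {y} : ℝ)) from funext fun p => (hqyeq p).symm]
      exact h0
    have hqyb : ∀ p, |qy p| ≤ 1 := by
      intro p
      rw [abs_of_nonneg ENNReal.toReal_nonneg]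
      have h1 : (Q p : Measure Y) {y} ≤ 1 := prob_le_one
      exact le_trans (ENNReal.toReal_mono ENNReal.one_ne_top h1) (by simp)
    -- the disintegration identity at the atom y, as an equality of measures
    have hmeasEq : ∀ (ζ : ProbabilityMeasure X) (b : A),
        (RprimeM P Q ζ b {y}) • ((H (ζ, b, y)) : Measure X)
          = ((ζ : Measure X).bind fun x => (P (x, b) : Measure X)).withDensity
              (fun x' => (Q (b, x') : Measure Y) {y}) := by
      intro ζ b
      ext B hB
      rw [Measure.smul_apply, withDensity_apply _ hB, smul_eq_mul]
      have hD := hHdis ζ b B {y} hB (measurableSet_singleton y)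
      have hqmeas : Measurable fun x' => (Q (b, x') : Measure Y) {y} :=
        (Measure.measurable_coe (measurableSet_singleton y)).comp (hQk b)
      have hL : Rfun P Q ζ b B {y}
          = ∫⁻ x' in B, (Q (b, x') : Measure Y) {y}
              ∂((ζ : Measure X).bind fun x => (P (x, b) : Measure X)) := by
        rw [← lintegral_indicator hB, Measure.lintegral_bind (hPk b).aemeasurable (hqmeas.indicator hB).aemeasurable]
        refine (lintegral_congr fun x => ?_).symm
        rw [lintegral_indicator hB]
      have hR : ∫⁻ y' in {y}, ((H (ζ, b, y') : Measure X)) B ∂(RprimeM P Q ζ b)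
          = RprimeM P Q ζ b {y} * ((H (ζ, b, y)) : Measure X) B := by
        rw [Measure.restrict_singleton, lintegral_smul_measure, lintegral_dirac, smul_eq_mul]
      rw [← hR, ← hD, hL]
    -- integral form of the identity, via bounded continuous functions
    have hkey : ∀ (ζ : ProbabilityMeasure X) (b : A) (h : BoundedContinuousFunction X ℝ),
        (RprimeM P Q ζ b {y}).toReal * ∫ x', h x' ∂((H (ζ, b, y)) : Measure X)
          = ∫ x, (∫ x', qy (b, x') * h x' ∂(P (x, b) : Measure X)) ∂(ζ : Measure X) := by
      intro ζ b h
      haveI := hmprob ζ b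
      have hhb : ∀ x', |h x'| ≤ ‖h‖ := fun x' => by
        simpa [Real.norm_eq_abs] using h.norm_coe_le_norm x'
      have h1 : ∫ x', h x' ∂((RprimeM P Q ζ b {y}) • ((H (ζ, b, y)) : Measure X))
          = (RprimeM P Q ζ b {y}).toReal * ∫ x', h x' ∂((H (ζ, b, y)) : Measure X) := by
        rw [integral_smul_measure, smul_eq_mul]
      rw [← h1, hmeasEq ζ b]
      set w : X → ℝ≥0 := fun x' => ((Q (b, x') : Measure Y) {y}).toNNReal with hw
      have hwmeas : Measurable w :=
        ((Measure.measurable_coe (measurableSet_singleton y)).comp (hQk b)).ennreal_toNNReal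
      have hwd : ((ζ : Measure X).bind fun x => (P (x, b) : Measure X)).withDensity
            (fun x' => (Q (b, x') : Measure Y) {y})
          = ((ζ : Measure X).bind fun x => (P (x, b) : Measure X)).withDensity
              (fun x' => (w x' : ℝ≥0∞)) := by
        congr 1
        funext x'
        rw [hw, ENNReal.coe_toNNReal (measure_ne_top _ _)]
      rw [hwd, integral_withDensity_eq_integral_smul hwmeas]
      have h2 : ∀ x', w x' • h x' = qy (b, x') * h x' := by
        intro x'
        rw [NNReal.smul_def, smul_eq_mul]
        rfl
      rw [show (fun x' => w x' • h x') = fun x' => qy (b, x') * h x' from funext h2]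
      exact integral_bind_of_bounded (hPk b) (fun _ => inferInstance)
        ((hqyc.comp (continuous_const.prodMk continuous_id)).mul h.continuous).measurable
        (M := ‖h‖) (fun x' => by
          rw [abs_mul]
          calc |qy (b, x')| * |h x'| ≤ 1 * ‖h‖ :=
                mul_le_mul (hqyb _) (hhb x') (abs_nonneg _) zero_le_one
            _ = ‖h‖ := one_mul _)
    -- now prove the weak convergence
    rw [ProbabilityMeasure.tendsto_iff_forall_integral_tendsto]
    intro h
    have hhb : ∀ x', |h x'| ≤ ‖h‖ := fun x' => by
      simpa [Real.norm_eq_abs] using h.norm_coe_le_norm x'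
    set θ : A × X → ℝ := fun p => qy p * h p.2 with hθdef
    have hθc : Continuous θ := hqyc.mul (h.continuous.comp continuous_snd)
    have hθb : ∀ p, |θ p| ≤ ‖h‖ := fun p => by
      rw [hθdef]
      show |qy p * h p.2| ≤ ‖h‖
      rw [abs_mul]
      calc |qy p| * |h p.2| ≤ 1 * ‖h‖ :=
            mul_le_mul (hqyb _) (hhb _) (abs_nonneg _) zero_le_one
        _ = ‖h‖ := one_mul _
    set Nf : ProbabilityMeasure X → A → ℝ :=
      fun ζ b => ∫ x, (∫ x', θ (b, x') ∂(P (x, b) : Measure X)) ∂(ζ : Measure X) with hNf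
    have hθint : ∀ (ζ : ProbabilityMeasure X) (b : A),
        (RprimeM P Q ζ b {y}).toReal * ∫ x', h x' ∂((H (ζ, b, y)) : Measure X)
          = Nf ζ b := fun ζ b => hkey ζ b h
    have hΦb' : ∀ p : A × X, |∫ x', θ (p.1, x') ∂(P (p.2, p.1) : Measure X)| ≤ ‖h‖ := by
      intro p
      haveI : IsProbabilityMeasure (P (p.2, p.1) : Measure X) := inferInstance
      exact abs_integral_le_of_bounded
        ((hθc.comp (continuous_const.prodMk continuous_id)).measurable.aestronglyMeasurable)
        (norm_nonneg h) (fun x' => hθb _)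
    have hNtend : Tendsto (fun n => Nf (zs n) (as n)) atTop (𝓝 (Nf z a)) :=
      houter (fun p => ∫ x', θ (p.1, x') ∂(P (p.2, p.1) : Measure X))
        (hΦcont θ hθc hθb) hΦb'
    have hrpos : 0 < (RprimeM P Q z a {y}).toReal :=
      ENNReal.toReal_pos hr0 (measure_ne_top _ _)
    have hrt := hrEreal y hy
    have hev : ∀ᶠ n in atTop, 0 < (RprimeM P Q (zs n) (as n) {y}).toReal :=
      hrt.eventually_const_lt hrpos
    have hdiv : Tendsto
        (fun n => Nf (zs n) (as n) / (RprimeM P Q (zs n) (as n) {y}).toReal) atTop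
        (𝓝 (Nf z a / (RprimeM P Q z a {y}).toReal)) := hNtend.div hrt hrpos.ne'
    have hlimEq : ∫ x', h x' ∂((H (z, a, y)) : Measure X)
        = Nf z a / (RprimeM P Q z a {y}).toReal := by
      rw [eq_div_iff hrpos.ne', mul_comm]
      exact hθint z a
    have hevEq : ∀ᶠ n in atTop,
        Nf (zs n) (as n) / (RprimeM P Q (zs n) (as n) {y}).toReal
          = ∫ x', h x' ∂((H (zs n, as n, y)) : Measure X) := by
      filter_upwards [hev] with n hn
      rw [eq_comm, eq_div_iff hn.ne', mul_comm]
      exact hθint (zs n) (as n)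
    have hfin := hdiv.congr' hevEq
    rw [hlimEq]
    exact hfin
  -- final assembly
  set gs : ℕ → Y → ℝ := fun n y => f (H (zs n, as n, y)) with hgsdef
  set g0 : Y → ℝ := fun y => f (H (z, a, y)) with hg0def
  have hfb : ∀ ζ', |f ζ'| ≤ ‖f‖ := fun ζ' => by
    simpa [Real.norm_eq_abs] using f.norm_coe_le_norm ζ'
  have hHm : ∀ (ζ : ProbabilityMeasure X) (b : A), Measurable fun y => H (ζ, b, y) :=
    fun ζ b => hHmeas.comp (measurable_const.prodMk (measurable_const.prodMk measurable_id))
  have hgsm : ∀ n, Measurable (gs n) :=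
    fun n => f.continuous.measurable.comp (hHm (zs n) (as n))
  have hg0m : Measurable g0 := f.continuous.measurable.comp (hHm z a)
  have hgsb : ∀ n y, |gs n y| ≤ ‖f‖ := fun n y => hfb _
  have hg0b : ∀ y, |g0 y| ≤ ‖f‖ := fun y => hfb _
  have hmap : ∀ (ζ : ProbabilityMeasure X) (b : A),
      ∫ ζ', f ζ' ∂(qker P Q H ζ b) = ∫ y, f (H (ζ, b, y)) ∂(RprimeM P Q ζ b) := by
    intro ζ b
    unfold qker
    exact integral_map (hHm ζ b).aemeasurable f.continuous.aestronglyMeasurable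
  have hsplitI : ∀ (ζ : ProbabilityMeasure X) (b : A) (gg : Y → ℝ), Measurable gg →
      (∀ y, |gg y| ≤ ‖f‖) →
      ∫ y, gg y ∂(RprimeM P Q ζ b)
        = (∫ y in Y₁, gg y ∂(RprimeM P Q ζ b)) + ∫ y in Y₂, gg y ∂(RprimeM P Q ζ b) := by
    intro ζ b gg hggm hggb
    haveI := hRprob ζ b
    have hint : Integrable gg (RprimeM P Q ζ b) :=
      integrable_of_bounded'' hggm.aestronglyMeasurable hggb
    rw [← integral_add_compl hY₁open.measurableSet hint, hY2eq]
  -- part 1 : the transparent (open) part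
  have hcomplR : Tendsto (fun n => ((Rp (zs n) (as n) : Measure Y) Y₁ᶜ).toReal) atTop
      (𝓝 (((Rp z a : Measure Y) Y₁ᶜ).toReal)) := by
    simp only [hcoeR]
    rw [← hY2eq]
    exact hY2tendReal
  have hloc1 : ∀ y ∈ Y₁, ∀ ε > 0, ∃ V ∈ 𝓝 y, V ⊆ Y₁ ∧ ∃ N : ℕ,
      (∀ n ≥ N, ∀ y' ∈ V, |gs n y' - g0 y| ≤ ε) ∧ (∀ y' ∈ V, |g0 y' - g0 y| ≤ ε) := by
    intro y hy ε hε
    have hopen : IsOpen {t : ProbabilityMeasure X × A × Y | t.2.2 ∈ Y₁} :=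
      IsOpen.preimage (continuous_snd.comp continuous_snd) hY₁open
    have hmem : (z, a, y) ∈ {t : ProbabilityMeasure X × A × Y | t.2.2 ∈ Y₁} := hy
    have hcontAt : ContinuousAt H (z, a, y) := hHcont.continuousAt (hopen.mem_nhds hmem)
    have hGc : ContinuousAt (fun t : ProbabilityMeasure X × A × Y => f (H t)) (z, a, y) :=
      (f.continuous.continuousAt).comp hcontAt
    have hev : {t : ProbabilityMeasure X × A × Y | |f (H t) - f (H (z, a, y))| ≤ ε}
        ∈ 𝓝 (z, a, y) := by
      have h3 : Tendsto (fun t : ProbabilityMeasure X × A × Y =>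
          |f (H t) - f (H (z, a, y))|) (𝓝 (z, a, y))
          (𝓝 |f (H (z, a, y)) - f (H (z, a, y))|) := (hGc.sub tendsto_const_nhds).abs
      rw [sub_self, abs_zero] at h3
      exact h3.eventually_le_const hε
    rw [mem_nhds_prod_iff] at hev
    obtain ⟨u, hu, w, hw, huw⟩ := hev
    rw [mem_nhds_prod_iff] at hw
    obtain ⟨u2, hu2, v, hv, hu2v⟩ := hw
    refine ⟨v ∩ Y₁, Filter.inter_mem hv (hY₁open.mem_nhds hy), Set.inter_subset_right, ?_⟩
    have hevn : ∀ᶠ n in atTop, zs n ∈ u ∧ as n ∈ u2 :=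
      (hz.eventually hu).and (ha.eventually hu2)
    obtain ⟨N, hN⟩ := eventually_atTop.mp hevn
    refine ⟨N, ?_, ?_⟩
    · intro n hn y' hy'
      exact huw (Set.mk_mem_prod (hN n hn).1 (hu2v (Set.mk_mem_prod (hN n hn).2 hy'.1)))
    · intro y' hy'
      exact huw (Set.mk_mem_prod (mem_of_mem_nhds hu)
        (hu2v (Set.mk_mem_prod (mem_of_mem_nhds hu2) hy'.1)))
  have hpart1 : Tendsto (fun n => ∫ y in Y₁, gs n y ∂(RprimeM P Q (zs n) (as n))) atTop
      (𝓝 (∫ y in Y₁, g0 y ∂(RprimeM P Q z a))) :=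
    setIntegral_tendsto_of_locally_unif (μs := fun n => Rp (zs n) (as n)) (μ := Rp z a)
      hRtend hY₁open hcomplR hgsm hg0m (norm_nonneg f) hgsb hg0b hloc1
  -- part 2 : the countable (atomic) part
  have hpart2 : Tendsto (fun n => ∫ y in Y₂, gs n y ∂(RprimeM P Q (zs n) (as n))) atTop
      (𝓝 (∫ y in Y₂, g0 y ∂(RprimeM P Q z a))) := by
    set rn : ℕ → ↥Y₂ → ℝ := fun n y => (RprimeM P Q (zs n) (as n) {(y : Y)}).toReal with hrn
    set r0 : ↥Y₂ → ℝ := fun y => (RprimeM P Q z a {(y : Y)}).toReal with hr0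
    have hr0nn : ∀ y : ↥Y₂, 0 ≤ r0 y := fun y => ENNReal.toReal_nonneg
    have hrnnn : ∀ n (y : ↥Y₂), 0 ≤ rn n y := fun n y => ENNReal.toReal_nonneg
    have hcnt : ∀ n, ∫ y in Y₂, gs n y ∂(RprimeM P Q (zs n) (as n))
        = ∑' (y : ↥Y₂), rn n y * gs n (y : Y) := by
      intro n
      haveI := hRprob (zs n) (as n)
      rw [setIntegral_countable _ hY₂count
        (integrable_of_bounded'' (hgsm n).aestronglyMeasurable (hgsb n)).integrableOn]
      refine tsum_congr fun y => ?_
      rw [smul_eq_mul, measureReal_def]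
    have hcnt0 : ∫ y in Y₂, g0 y ∂(RprimeM P Q z a) = ∑' (y : ↥Y₂), r0 y * g0 (y : Y) := by
      haveI := hRprob z a
      rw [setIntegral_countable _ hY₂count
        (integrable_of_bounded'' hg0m.aestronglyMeasurable hg0b).integrableOn]
      refine tsum_congr fun y => ?_
      rw [smul_eq_mul, measureReal_def]
    -- summability facts
    have hsumA : ∀ n, Summable fun y : ↥Y₂ => r0 y * gs n (y : Y) := by
      intro n
      refine Summable.of_norm (Summable.of_nonneg_of_le (fun y => norm_nonneg _) ?_
        ((hsummable z a).mul_right ‖f‖))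
      intro y
      rw [Real.norm_eq_abs, abs_mul, abs_of_nonneg (hr0nn y)]
      exact mul_le_mul_of_nonneg_left (hgsb n _) (hr0nn y)
    have hsumB : ∀ n, Summable fun y : ↥Y₂ => (rn n y - r0 y) * gs n (y : Y) := by
      intro n
      refine Summable.of_norm (Summable.of_nonneg_of_le (fun y => norm_nonneg _) ?_
        (((hsummable (zs n) (as n)).add (hsummable z a)).mul_right ‖f‖))
      intro y
      rw [Real.norm_eq_abs, abs_mul]
      have h1 : |rn n y - r0 y| ≤ rn n y + r0 y := by
        rw [abs_sub_le_iff]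
        constructor <;> [linarith [hr0nn y, hrnnn n y]; linarith [hr0nn y, hrnnn n y]]
      exact mul_le_mul h1 (hgsb n _) (abs_nonneg _)
        (add_nonneg (hrnnn n y) (hr0nn y))
    have hA : Tendsto (fun n => ∑' (y : ↥Y₂), r0 y * gs n (y : Y)) atTop
        (𝓝 (∑' (y : ↥Y₂), r0 y * g0 (y : Y))) := by
      refine tendsto_tsum_of_dominated_convergence ((hsummable z a).mul_right ‖f‖) ?_ ?_
      · intro y
        rcases eq_or_ne (RprimeM P Q z a {(y : Y)}) 0 with h0 | h0
        · have hz0 : r0 y = 0 := by rw [hr0]; simp [h0]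
          simp only [hz0, zero_mul]
          exact tendsto_const_nhds
        · have hH := hHatom (y : Y) y.2 h0
          have hgg : Tendsto (fun n => gs n (y : Y)) atTop (𝓝 (g0 (y : Y))) :=
            (f.continuous.tendsto _).comp hH
          exact tendsto_const_nhds.mul hgg
      · refine Eventually.of_forall fun n y => ?_
        rw [Real.norm_eq_abs, abs_mul, abs_of_nonneg (hr0nn y)]
        exact mul_le_mul_of_nonneg_left (hgsb n _) (hr0nn y)
    have hB : Tendsto (fun n => ∑' (y : ↥Y₂), (rn n y - r0 y) * gs n (y : Y)) atTop
        (𝓝 0) := by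
      have hl1sum : ∀ n, Summable fun y : ↥Y₂ => |rn n y - r0 y| := by
        intro n
        refine Summable.of_nonneg_of_le (fun y => abs_nonneg _) ?_
          ((hsummable (zs n) (as n)).add (hsummable z a))
        intro y
        rw [abs_sub_le_iff]
        constructor <;> [skip; skip] <;> linarith [hr0nn y, hrnnn n y]
      have hbnd : ∀ n, ‖∑' (y : ↥Y₂), (rn n y - r0 y) * gs n (y : Y)‖
          ≤ ‖f‖ * ∑' (y : ↥Y₂), |rn n y - r0 y| := by
        intro n
        calc ‖∑' (y : ↥Y₂), (rn n y - r0 y) * gs n (y : Y)‖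
            ≤ ∑' (y : ↥Y₂), ‖(rn n y - r0 y) * gs n (y : Y)‖ := by
              refine norm_tsum_le_tsum_norm ?_
              refine Summable.of_nonneg_of_le (fun y => norm_nonneg _) ?_
                ((hl1sum n).mul_right ‖f‖)
              intro y
              rw [Real.norm_eq_abs, abs_mul]
              exact mul_le_mul_of_nonneg_left (hgsb n _) (abs_nonneg _)
          _ ≤ ∑' (y : ↥Y₂), |rn n y - r0 y| * ‖f‖ := by
              refine Summable.tsum_le_tsum ?_ ?_ ((hl1sum n).mul_right ‖f‖)
              · intro y
                rw [Real.norm_eq_abs, abs_mul]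
                exact mul_le_mul_of_nonneg_left (hgsb n _) (abs_nonneg _)
              · refine Summable.of_nonneg_of_le (fun y => norm_nonneg _) ?_
                  ((hl1sum n).mul_right ‖f‖)
                intro y
                rw [Real.norm_eq_abs, abs_mul]
                exact mul_le_mul_of_nonneg_left (hgsb n _) (abs_nonneg _)
          _ = ‖f‖ * ∑' (y : ↥Y₂), |rn n y - r0 y| := by rw [tsum_mul_right, mul_comm]
      refine squeeze_zero_norm hbnd ?_
      have := hl1.const_mul ‖f‖
      rwa [mul_zero] at this
    have hsum_eq2 : ∀ n, ∑' (y : ↥Y₂), rn n y * gs n (y : Y)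
        = (∑' (y : ↥Y₂), r0 y * gs n (y : Y))
          + ∑' (y : ↥Y₂), (rn n y - r0 y) * gs n (y : Y) := by
      intro n
      rw [← Summable.tsum_add (hsumA n) (hsumB n)]
      refine tsum_congr fun y => ?_
      ring
    have hfin := hA.add hB
    rw [add_zero] at hfin
    have heq : ∀ n, ∫ y in Y₂, gs n y ∂(RprimeM P Q (zs n) (as n))
        = (∑' (y : ↥Y₂), r0 y * gs n (y : Y))
          + ∑' (y : ↥Y₂), (rn n y - r0 y) * gs n (y : Y) :=
      fun n => (hcnt n).trans (hsum_eq2 n)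
    rw [hcnt0]
    exact Tendsto.congr (fun n => (heq n).symm) hfin
  -- combine the two parts
  have hfinal := hpart1.add hpart2
  have he1 : ∀ n, ∫ ζ', f ζ' ∂(qker P Q H (zs n) (as n))
      = (∫ y in Y₁, gs n y ∂(RprimeM P Q (zs n) (as n)))
        + ∫ y in Y₂, gs n y ∂(RprimeM P Q (zs n) (as n)) := by
    intro n
    rw [hmap (zs n) (as n)]
    exact hsplitI (zs n) (as n) (gs n) (hgsm n) (hgsb n)
  have he2 : ∫ ζ', f ζ' ∂(qker P Q H z a)
      = (∫ y in Y₁, g0 y ∂(RprimeM P Q z a)) + ∫ y in Y₂, g0 y ∂(RprimeM P Q z a) := by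
    rw [hmap z a]
    exact hsplitI z a g0 hg0m hg0b
  rw [he2]
  exact Tendsto.congr (fun n => (he1 n).symm) hfinal
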